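/- Let d = ((d_i^+, d_i^-))_{i=1}^N be a digraphic integer-pair sequence. Suppose there exist distinct coordinates j_1, j_2, j_3 and an integer pair (k,l) with k ≥ 1 and l ≥ 1 such that: (1) d_{j_1} = d_{j_2} = d_{j_3} = (k,l); (2) in the positive lexicographical ordering d̄ of d, coordinates l, l+1, l+2 equal (k,l), and in the negative lexicographical ordering d̲ of d, coordinates k, k+1, k+2 equal (k,l); and (3) the slack sequences satisfy (s̄_{l-1}, s̄_l, s̄_{l+1}, s̄_{l+2}) = (0,1,1,0) and (s̲_{k-1}, s̲_k, s̲_{k+1}, s̲_{k+2}) = (0,1,1,0). Then in every realization G ∈ R(d), the vertices v_{j_1}, v_{j_2}, v_{j_3} induce a directed 3-cycle. -/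

import Mathlib

/-- A simple directed graph on vertex set `V`: an irreflexive (Boolean) arc
relation, i.e. no self-loops and at most one arc in each direction. -/
structure SDigraph (V : Type) where
  Adj : V → V → Bool
  irrefl : ∀ v, Adj v v = false

/-- Out-degree of a vertex. -/
def SDigraph.outDeg {V : Type} [Fintype V] [DecidableEq V]
    (G : SDigraph V) (v : V) : ℕ :=
  (Finset.univ.filter fun x => G.Adj v x = true).card

/-- In-degree of a vertex. -/
def SDigraph.inDeg {V : Type} [Fintype V] [DecidableEq V]
    (G : SDigraph V) (v : V) : ℕ :=
  (Finset.univ.filter fun x => G.Adj x v = true).card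

/-- `G` realizes the integer-pair (degree) sequence `d`: vertex `v` has
out-degree `(d v).1` and in-degree `(d v).2`. -/
def Realizes {V : Type} [Fintype V] [DecidableEq V]
    (G : SDigraph V) (d : V → ℕ × ℕ) : Prop :=
  ∀ v, G.outDeg v = (d v).1 ∧ G.inDeg v = (d v).2

/-- `H` is obtained from `G` by a single 2-switch: arcs `(v₁,v₂)`, `(v₃,v₄)`
are replaced by `(v₁,v₄)`, `(v₃,v₂)`, allowed only when the four vertices
are distinct, the former two are arcs and the latter two are not. -/
def TwoSwitch {V : Type} [DecidableEq V] (G H : SDigraph V) : Prop :=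
  ∃ v₁ v₂ v₃ v₄ : V,
    v₁ ≠ v₂ ∧ v₁ ≠ v₃ ∧ v₁ ≠ v₄ ∧ v₂ ≠ v₃ ∧ v₂ ≠ v₄ ∧ v₃ ≠ v₄ ∧
    G.Adj v₁ v₂ = true ∧ G.Adj v₃ v₄ = true ∧
    G.Adj v₁ v₄ = false ∧ G.Adj v₃ v₂ = false ∧
    ∀ x y, H.Adj x y =
      if (x = v₁ ∧ y = v₂) ∨ (x = v₃ ∧ y = v₄) then false
      else if (x = v₁ ∧ y = v₄) ∨ (x = v₃ ∧ y = v₂) then true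
      else G.Adj x y

/-- `G` and `H` differ by a single 2-switch (in either direction). -/
def TwoSwitchStep {V : Type} [DecidableEq V] (G H : SDigraph V) : Prop :=
  TwoSwitch G H ∨ TwoSwitch H G

/-- `H` is reachable from `G` by a finite sequence of 2-switches. -/
def Reach2 {V : Type} [DecidableEq V] (G H : SDigraph V) : Prop :=
  Relation.ReflTransGen TwoSwitchStep G H

/-- `H` is obtained from `G` by reorienting an induced directed 3-cycle:
there are distinct `u v w` with arcs `(u,v),(v,w),(w,u)` and no arcs
`(v,u),(w,v),(u,w)`, and `H` replaces these three arcs by the reversed ones. -/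
def CycleReorient {V : Type} [DecidableEq V] (G H : SDigraph V) : Prop :=
  ∃ u v w : V, u ≠ v ∧ v ≠ w ∧ u ≠ w ∧
    G.Adj u v = true ∧ G.Adj v w = true ∧ G.Adj w u = true ∧
    G.Adj v u = false ∧ G.Adj w v = false ∧ G.Adj u w = false ∧
    ∀ x y, H.Adj x y =
      if (x = u ∨ x = v ∨ x = w) ∧ (y = u ∨ y = v ∨ y = w) then G.Adj y x
      else G.Adj x y

/-- The three vertices `u, v, w` induce a directed 3-cycle in `G`: the induced
subgraph on them consists of exactly the three arcs of one cyclic orientation. -/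
def InducesC3 {V : Type} (G : SDigraph V) (u v w : V) : Prop :=
  (G.Adj u v = true ∧ G.Adj v w = true ∧ G.Adj w u = true ∧
    G.Adj v u = false ∧ G.Adj w v = false ∧ G.Adj u w = false) ∨
  (G.Adj v u = true ∧ G.Adj w v = true ∧ G.Adj u w = true ∧
    G.Adj u v = false ∧ G.Adj v w = false ∧ G.Adj w u = false)

/-- The digraph obtained from `G` by reversing all arcs among `{u, v, w}`
(and leaving all other arcs unchanged).  When `{u,v,w}` induces a directed
3-cycle in `G`, this is exactly the reorientation of that 3-cycle. -/
def flip3 {V : Type} [DecidableEq V] (G : SDigraph V) (u v w : V) : SDigraph V where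
  Adj x y :=
    if (x = u ∨ x = v ∨ x = w) ∧ (y = u ∨ y = v ∨ y = w) then G.Adj y x
    else G.Adj x y
  irrefl := by
    intro x
    show (if _ then G.Adj x x else G.Adj x x) = false
    rw [ite_self]
    exact G.irrefl x

/-- The corrected conjugate sequence of an integer sequence `a` (indexed by
`Fin N`, thought of as positions `1, …, N`), at (1-based) position `k`:
`a''_k = |{i : i < k, a_i ≥ k-1}| + |{i : i > k, a_i ≥ k}|`. -/
def cconj {N : ℕ} (a : Fin N → ℕ) (k : ℕ) : ℕ :=
  (Finset.univ.filter fun i : Fin N => (i : ℕ) + 1 < k ∧ k - 1 ≤ a i).card +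
  (Finset.univ.filter fun i : Fin N => k < (i : ℕ) + 1 ∧ k ≤ a i).card

/-- The slack sequence `s̄` of a pair sequence `a` (intended: the positively
ordered sequence `d̄`): `s̄_l = Σ_{i=1}^l [a⁻]''_i − Σ_{i=1}^l a⁺_i`, where
`a⁺, a⁻` are the first- and second-coordinate sequences.  `s̄_0 = 0`. -/
def slackBar {N : ℕ} (a : Fin N → ℕ × ℕ) (l : ℕ) : ℤ :=
  (∑ i ∈ Finset.range l, (cconj (fun j => (a j).2) (i + 1) : ℤ)) -
  ∑ j ∈ Finset.univ.filter (fun j : Fin N => (j : ℕ) < l), ((a j).1 : ℤ)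

/-- The slack sequence `s̲` of a pair sequence `a` (intended: the negatively
ordered sequence `d̲`): `s̲_k = Σ_{i=1}^k [a⁺]''_i − Σ_{i=1}^k a⁻_i`.
`s̲_0 = 0`. -/
def slackUbar {N : ℕ} (a : Fin N → ℕ × ℕ) (k : ℕ) : ℤ :=
  (∑ i ∈ Finset.range k, (cconj (fun j => (a j).1) (i + 1) : ℤ)) -
  ∑ j ∈ Finset.univ.filter (fun j : Fin N => (j : ℕ) < k), ((a j).2 : ℤ)

/-- `a` is non-increasing in the positive lexicographical order (first
coordinate first, ties broken by the second coordinate). -/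
def PosOrdered {N : ℕ} (a : Fin N → ℕ × ℕ) : Prop :=
  ∀ i j : Fin N, i ≤ j →
    (a j).1 < (a i).1 ∨ ((a i).1 = (a j).1 ∧ (a j).2 ≤ (a i).2)

/-- `a` is non-increasing in the negative lexicographical order (second
coordinate first, ties broken by the first coordinate). -/
def NegOrdered {N : ℕ} (a : Fin N → ℕ × ℕ) : Prop :=
  ∀ i j : Fin N, i ≤ j →
    (a j).2 < (a i).2 ∨ ((a i).2 = (a j).2 ∧ (a j).1 ≤ (a i).1)

/-- `b` is a rearrangement (permutation) of the sequence `a`. -/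
def IsRearrangement {N : ℕ} (a b : Fin N → ℕ × ℕ) : Prop :=
  ∃ σ : Equiv.Perm (Fin N), ∀ i, b i = a (σ i)

def indegS {V : Type} [Fintype V] [DecidableEq V]
    (G : SDigraph V) (S : Finset V) (v : V) : ℕ :=
  (S.filter fun u => G.Adj u v = true).card

lemma double_count {V : Type} [Fintype V] [DecidableEq V]
    (G : SDigraph V) (d : V → ℕ × ℕ) (hG : Realizes G d) (S : Finset V) :
    ∑ v ∈ S, (d v).1 = ∑ u : V, indegS G S u := by
  have : ∀ v ∈ S, (d v).1 = ∑ u : V, (if G.Adj v u = true then 1 else 0) := by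
    intro v _
    rw [← (hG v).1, SDigraph.outDeg, Finset.card_filter]
  rw [Finset.sum_congr rfl this, Finset.sum_comm]
  apply Finset.sum_congr rfl
  intro u _
  rw [indegS, Finset.card_filter]

lemma indegS_le {V : Type} [Fintype V] [DecidableEq V]
    (G : SDigraph V) (d : V → ℕ × ℕ) (hG : Realizes G d) (S : Finset V) (v : V) :
    indegS G S v ≤ if v ∈ S then min ((d v).2) (S.card - 1) else min ((d v).2) S.card := by
  have h1 : indegS G S v ≤ (d v).2 := by
    rw [← (hG v).2, SDigraph.inDeg]
    exact Finset.card_le_card (Finset.filter_subset_filter _ (Finset.subset_univ S))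
  have h2 : indegS G S v ≤ S.card := Finset.card_le_card (Finset.filter_subset _ _)
  split_ifs with hv
  · have h3 : indegS G S v ≤ S.card - 1 := by
      have : (S.filter fun u => G.Adj u v = true) ⊆ S.erase v := by
        intro u hu
        rw [Finset.mem_filter] at hu
        refine Finset.mem_erase.2 ⟨?_, hu.1⟩
        intro h; rw [h] at hu; rw [G.irrefl v] at hu; simp at hu
      calc indegS G S v ≤ (S.erase v).card := Finset.card_le_card this
        _ = S.card - 1 := Finset.card_erase_of_mem hv
    omega
  · omega

lemma tight {V : Type} [Fintype V] [DecidableEq V]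
    (G : SDigraph V) (d : V → ℕ × ℕ) (hG : Realizes G d) (S : Finset V)
    (hsum : ∑ v ∈ S, (d v).1 =
      ∑ v : V, (if v ∈ S then min ((d v).2) (S.card - 1) else min ((d v).2) S.card)) :
    ∀ v : V, indegS G S v =
      if v ∈ S then min ((d v).2) (S.card - 1) else min ((d v).2) S.card := by
  have hle : ∀ v ∈ Finset.univ, indegS G S v ≤
      if v ∈ S then min ((d v).2) (S.card - 1) else min ((d v).2) S.card :=
    fun v _ => indegS_le G d hG S v
  have heq : ∑ v : V, indegS G S v =
      ∑ v : V, (if v ∈ S then min ((d v).2) (S.card - 1) else min ((d v).2) S.card) := by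
    rw [← double_count G d hG S, hsum]
  intro v
  exact (Finset.sum_eq_sum_iff_of_le hle).1 heq v (Finset.mem_univ v)
lemma cconj_sum {N : ℕ} (a : Fin N → ℕ) (m : ℕ) :
    ∑ i ∈ Finset.range m, cconj a (i + 1) =
      ∑ j : Fin N, (if (j : ℕ) < m then min (a j) (m - 1) else min (a j) m) := by
  induction m with
  | zero => simp
  | succ m ih =>
    rw [Finset.sum_range_succ, ih]
    have h1 : cconj a (m + 1) =
        ∑ j : Fin N, ((if (j : ℕ) < m ∧ m ≤ a j then 1 else 0) +
          (if m < (j : ℕ) ∧ m + 1 ≤ a j then 1 else 0)) := by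
      rw [Finset.sum_add_distrib]
      unfold cconj
      rw [Finset.card_filter, Finset.card_filter]
      congr 1
      · exact Finset.sum_congr rfl fun j _ => by congr 1; rw [eq_iff_iff]; omega
      · exact Finset.sum_congr rfl fun j _ => by congr 1; rw [eq_iff_iff]; omega
    rw [h1, ← Finset.sum_add_distrib]
    exact Finset.sum_congr rfl fun j _ => by split_ifs <;> omega

lemma sum_ite_split {α : Type} [Fintype α] (p : α → Prop) [DecidablePred p] (A B : α → ℤ) :
    ∑ v : α, (if p v then A v else B v) =
      ∑ v : α, B v + ∑ v ∈ Finset.univ.filter p, (A v - B v) := by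
  have h1 : ∑ v ∈ Finset.univ.filter p, (A v - B v)
      = ∑ v : α, ((if p v then A v else B v) - B v) := by
    rw [Finset.sum_filter]
    exact Finset.sum_congr rfl fun v _ => by split_ifs <;> simp
  rw [h1, Finset.sum_sub_distrib]
  ring

lemma slack_transfer {N : ℕ} (d dbar : Fin N → ℕ × ℕ) (σ : Equiv.Perm (Fin N))
    (hσ : ∀ i, dbar i = d (σ i)) (S : Finset (Fin N)) (m : ℕ) (hm : S.card = m)
    (htrans : ∀ f : ℕ × ℕ → ℤ, ∑ v ∈ S, f (d v) =
      ∑ j ∈ Finset.univ.filter (fun j : Fin N => (j : ℕ) < m), f (dbar j))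
    (hs : slackBar dbar m = 0) :
    ∑ v ∈ S, (d v).1 =
      ∑ v : Fin N, (if v ∈ S then min ((d v).2) (m - 1) else min ((d v).2) m) := by
  have e1 : (∑ i ∈ Finset.range m, (cconj (fun j => (dbar j).2) (i + 1) : ℤ)) =
      ∑ j : Fin N, (if (j : ℕ) < m then ((min ((dbar j).2) (m - 1) : ℕ) : ℤ)
        else ((min ((dbar j).2) m : ℕ) : ℤ)) := by
    have h := cconj_sum (fun j => (dbar j).2) m
    rw [← Nat.cast_sum, h, Nat.cast_sum]
    exact Finset.sum_congr rfl fun j _ => by split_ifs <;> rfl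
  have e2 : ∑ j : Fin N, (if (j : ℕ) < m then ((min ((dbar j).2) (m - 1) : ℕ) : ℤ)
        else ((min ((dbar j).2) m : ℕ) : ℤ)) =
      ∑ j : Fin N, ((min ((dbar j).2) m : ℕ) : ℤ) +
      ∑ j ∈ Finset.univ.filter (fun j : Fin N => (j : ℕ) < m),
        (((min ((dbar j).2) (m - 1) : ℕ) : ℤ) - ((min ((dbar j).2) m : ℕ) : ℤ)) :=
    sum_ite_split _ _ _
  have e3 : ∑ j : Fin N, ((min ((dbar j).2) m : ℕ) : ℤ)
      = ∑ v : Fin N, ((min ((d v).2) m : ℕ) : ℤ) := by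
    calc ∑ j : Fin N, ((min ((dbar j).2) m : ℕ) : ℤ)
        = ∑ j : Fin N, ((min ((d (σ j)).2) m : ℕ) : ℤ) :=
          Finset.sum_congr rfl fun j _ => by rw [hσ]
      _ = ∑ v : Fin N, ((min ((d v).2) m : ℕ) : ℤ) :=
          Equiv.sum_comp σ (fun v => ((min ((d v).2) m : ℕ) : ℤ))
  have e4 : ∑ j ∈ Finset.univ.filter (fun j : Fin N => (j : ℕ) < m),
        (((min ((dbar j).2) (m - 1) : ℕ) : ℤ) - ((min ((dbar j).2) m : ℕ) : ℤ)) =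
      ∑ v ∈ S, (((min ((d v).2) (m - 1) : ℕ) : ℤ) - ((min ((d v).2) m : ℕ) : ℤ)) :=
    (htrans fun p => ((min p.2 (m - 1) : ℕ) : ℤ) - ((min p.2 m : ℕ) : ℤ)).symm
  have e5 : ∑ v : Fin N, (if v ∈ S then ((min ((d v).2) (m - 1) : ℕ) : ℤ)
        else ((min ((d v).2) m : ℕ) : ℤ)) =
      ∑ v : Fin N, ((min ((d v).2) m : ℕ) : ℤ) +
      ∑ v ∈ S, (((min ((d v).2) (m - 1) : ℕ) : ℤ) - ((min ((d v).2) m : ℕ) : ℤ)) := by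
    rw [sum_ite_split (fun v => v ∈ S) _ _, Finset.filter_univ_mem]
  have e6 : ∑ j ∈ Finset.univ.filter (fun j : Fin N => (j : ℕ) < m), ((dbar j).1 : ℤ) =
      ∑ v ∈ S, ((d v).1 : ℤ) := (htrans fun p => (p.1 : ℤ)).symm
  have hZ : ∑ v ∈ S, ((d v).1 : ℤ) =
      ∑ v : Fin N, (if v ∈ S then ((min ((d v).2) (m - 1) : ℕ) : ℤ)
        else ((min ((d v).2) m : ℕ) : ℤ)) := by
    unfold slackBar at hs
    rw [e1, e2, e3, e4, e6] at hs
    rw [e5]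
    linarith
  have hcast : ((∑ v ∈ S, (d v).1 : ℕ) : ℤ) =
      ((∑ v : Fin N, (if v ∈ S then min ((d v).2) (m - 1) else min ((d v).2) m) : ℕ) : ℤ) := by
    rw [Nat.cast_sum, Nat.cast_sum, hZ]
    exact Finset.sum_congr rfl fun v _ => by split_ifs <;> rfl
  exact_mod_cast hcast

lemma card_filter_lt {N m : ℕ} (h : m ≤ N) :
    ((Finset.univ : Finset (Fin N)).filter fun j : Fin N => (j:ℕ) < m).card = m := by
  have : ((Finset.univ : Finset (Fin N)).filter fun j : Fin N => (j:ℕ) < m)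
      = (Finset.range m).attachFin (fun x hx => lt_of_lt_of_le (Finset.mem_range.1 hx) h) := by
    ext j
    simp [Finset.mem_attachFin]
  rw [this, Finset.card_attachFin, Finset.card_range]

lemma sum_const_pairs {α : Type} (s : Finset α) (g : α → ℕ × ℕ) (c : ℕ × ℕ)
    (h : ∀ v ∈ s, g v = c) (f : ℕ × ℕ → ℤ) :
    ∑ v ∈ s, f (g v) = s.card * f c := by
  calc ∑ v ∈ s, f (g v) = ∑ _v ∈ s, f c :=
        Finset.sum_congr rfl fun v hv => by rw [h v hv]
    _ = s.card * f c := by rw [Finset.sum_const, nsmul_eq_mul]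

set_option maxHeartbeats 1000000 in
lemma oneSide {N : ℕ} (d dbar : Fin N → ℕ × ℕ) (G : SDigraph (Fin N))
    (hG : Realizes G d) (σ : Equiv.Perm (Fin N)) (hσ : ∀ i, dbar i = d (σ i))
    (j₁ j₂ j₃ : Fin N) (h12 : j₁ ≠ j₂) (h23 : j₂ ≠ j₃) (h13 : j₁ ≠ j₃)
    (k l : ℕ) (hl1 : 1 ≤ l) (hlN : l + 1 < N)
    (hv : ∀ j ∈ ({j₁, j₂, j₃} : Finset (Fin N)), d j = (k, l))
    (hb0 : dbar ⟨l - 1, by omega⟩ = (k, l)) (hb1 : dbar ⟨l, by omega⟩ = (k, l))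
    (hb2 : dbar ⟨l + 1, by omega⟩ = (k, l))
    (hs0 : slackBar dbar (l - 1) = 0) (hs3 : slackBar dbar (l + 2) = 0) :
    ∀ j ∈ ({j₁, j₂, j₃} : Finset (Fin N)),
      (({j₁, j₂, j₃} : Finset (Fin N)).filter fun u => G.Adj u j = true).card = 1 := by
  set T : Finset (Fin N) := {j₁, j₂, j₃} with hT
  have hT3 : T.card = 3 := by
    rw [hT, Finset.card_insert_of_notMem (by simp [h12, h13]),
      Finset.card_insert_of_notMem (by simp [h23]), Finset.card_singleton]
  set P : Finset (Fin N) :=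
    (Finset.univ.filter fun i : Fin N => (i:ℕ) < l - 1).image σ with hPdef
  have hPcard : P.card = l - 1 := by
    rw [hPdef, Finset.card_image_of_injective _ σ.injective, card_filter_lt (by omega)]
  set i0 : Fin N := ⟨l - 1, by omega⟩ with hi0
  set i1 : Fin N := ⟨l, by omega⟩ with hi1
  set i2 : Fin N := ⟨l + 1, by omega⟩ with hi2
  set C : Finset (Fin N) := {σ i0, σ i1, σ i2} with hCdef
  have hne01 : σ i0 ≠ σ i1 := σ.injective.ne (by simp only [hi0, hi1, ne_eq, Fin.mk.injEq]; omega)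
  have hne02 : σ i0 ≠ σ i2 := σ.injective.ne (by simp only [hi0, hi2, ne_eq, Fin.mk.injEq]; omega)
  have hne12 : σ i1 ≠ σ i2 := σ.injective.ne (by simp only [hi1, hi2, ne_eq, Fin.mk.injEq]; omega)
  have hC3 : C.card = 3 := by
    rw [hCdef, Finset.card_insert_of_notMem (by simp [hne01, hne02]),
      Finset.card_insert_of_notMem (by simp [hne12]), Finset.card_singleton]
  have hdC : ∀ v ∈ C, d v = (k, l) := by
    intro v hvC
    rw [hCdef] at hvC
    simp only [Finset.mem_insert, Finset.mem_singleton] at hvC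
    rcases hvC with rfl | rfl | rfl
    · rw [← hσ]; exact hb0
    · rw [← hσ]; exact hb1
    · rw [← hσ]; exact hb2
  have hCP : Disjoint C P := by
    rw [Finset.disjoint_left]
    intro v hvC hvP
    rw [hPdef] at hvP
    simp only [Finset.mem_image, Finset.mem_filter, Finset.mem_univ, true_and] at hvP
    obtain ⟨i', hi', hEq⟩ := hvP
    rw [hCdef] at hvC
    simp only [Finset.mem_insert, Finset.mem_singleton] at hvC
    rcases hvC with h | h | h <;>
      · have h2 := σ.injective (hEq.trans h)
        subst h2
        simp only [hi0, hi1, hi2] at hi'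
        omega
  have hPTle : (P ∩ T).card ≤ (C \ T).card := by
    have h1 := Finset.card_inter_add_card_sdiff C T
    have h2 : (P ∩ T) ∪ (C ∩ T) ⊆ T := by
      intro x hx
      rw [Finset.mem_union] at hx
      rcases hx with hx | hx <;> exact (Finset.mem_inter.1 hx).2
    have hdisj : Disjoint (P ∩ T) (C ∩ T) :=
      Finset.disjoint_of_subset_left Finset.inter_subset_left
        (Finset.disjoint_of_subset_right Finset.inter_subset_left hCP.symm)
    have h3 := Finset.card_le_card h2
    rw [Finset.card_union_of_disjoint hdisj] at h3
    omega
  obtain ⟨R, hRsub, hRcard⟩ := Finset.exists_subset_card_eq hPTle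
  have hRC : R ⊆ C := hRsub.trans Finset.sdiff_subset
  set S₁ : Finset (Fin N) := (P \ T) ∪ R with hS1def
  have hdisj1 : Disjoint (P \ T) R :=
    Finset.disjoint_of_subset_left Finset.sdiff_subset
      (Finset.disjoint_of_subset_right hRC hCP.symm)
  have hS1card : S₁.card = l - 1 := by
    rw [hS1def, Finset.card_union_of_disjoint hdisj1, hRcard]
    have := Finset.card_inter_add_card_sdiff P T
    omega
  have hS1T : Disjoint S₁ T := by
    rw [hS1def, Finset.disjoint_union_left]
    exact ⟨Finset.sdiff_disjoint,
      Finset.disjoint_of_subset_left hRsub Finset.sdiff_disjoint⟩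
  have htransA : ∀ f : ℕ × ℕ → ℤ, ∑ v ∈ S₁, f (d v) =
      ∑ j ∈ Finset.univ.filter (fun j : Fin N => (j : ℕ) < l - 1), f (dbar j) := by
    intro f
    have hPsum : ∑ v ∈ P, f (d v) =
        ∑ j ∈ Finset.univ.filter (fun j : Fin N => (j : ℕ) < l - 1), f (dbar j) := by
      rw [hPdef, Finset.sum_image (fun a _ b _ h => σ.injective h)]
      exact Finset.sum_congr rfl fun j _ => by rw [← hσ]
    have hsplit : ∑ v ∈ P \ T, f (d v) + ∑ v ∈ P ∩ T, f (d v) = ∑ v ∈ P, f (d v) := by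
      have h1 : P \ (P ∩ T) = P \ T := Finset.sdiff_inter_self_left P T
      have h2 := Finset.sum_sdiff (f := fun v => f (d v))
        (Finset.inter_subset_left : P ∩ T ⊆ P)
      rw [h1] at h2
      exact h2
    have hRsum : ∑ v ∈ R, f (d v) = R.card * f (k, l) :=
      sum_const_pairs R d (k, l) (fun v hv' => hdC v (hRC hv')) f
    have hPTsum : ∑ v ∈ P ∩ T, f (d v) = (P ∩ T).card * f (k, l) :=
      sum_const_pairs _ d (k, l) (fun v hv' => hv v (Finset.mem_inter.1 hv').2) f
    rw [hS1def, Finset.sum_union hdisj1, hRsum, hRcard, ← hPsum, ← hsplit, hPTsum]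
  obtain ⟨S₂, hS2def⟩ : ∃ S₂ : Finset (Fin N), S₂ = S₁ ∪ T := ⟨_, rfl⟩
  have hS2card : S₂.card = l + 2 := by
    rw [hS2def, Finset.card_union_of_disjoint hS1T, hS1card, hT3]
    omega
  have htransB : ∀ f : ℕ × ℕ → ℤ, ∑ v ∈ S₂, f (d v) =
      ∑ j ∈ Finset.univ.filter (fun j : Fin N => (j : ℕ) < l + 2), f (dbar j) := by
    intro f
    have hTsum : ∑ v ∈ T, f (d v) = 3 * f (k, l) := by
      rw [sum_const_pairs T d (k, l) hv f, hT3]; norm_num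
    have hfilter : Finset.univ.filter (fun j : Fin N => (j : ℕ) < l + 2) =
        (Finset.univ.filter (fun j : Fin N => (j : ℕ) < l - 1)) ∪ {i0, i1, i2} := by
      ext j
      simp only [Finset.mem_filter, Finset.mem_univ, true_and, Finset.mem_union,
        Finset.mem_insert, Finset.mem_singleton, hi0, hi1, hi2, Fin.ext_iff]
      omega
    have hdisjf : Disjoint
        (Finset.univ.filter (fun j : Fin N => (j : ℕ) < l - 1))
        ({i0, i1, i2} : Finset (Fin N)) := by
      rw [Finset.disjoint_right]
      intro x hx hx'
      simp only [Finset.mem_insert, Finset.mem_singleton] at hx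
      simp only [Finset.mem_filter, Finset.mem_univ, true_and] at hx'
      rcases hx with rfl | rfl | rfl <;> simp [hi0, hi1, hi2] at hx' <;> omega
    have hi01 : i0 ≠ i1 := by simp only [hi0, hi1, ne_eq, Fin.mk.injEq]; omega
    have hi02 : i0 ≠ i2 := by simp only [hi0, hi2, ne_eq, Fin.mk.injEq]; omega
    have hi12 : i1 ≠ i2 := by simp only [hi1, hi2, ne_eq, Fin.mk.injEq]; omega
    have htriple : ∑ j ∈ ({i0, i1, i2} : Finset (Fin N)), f (dbar j) = 3 * f (k, l) := by
      have hcard : ({i0, i1, i2} : Finset (Fin N)).card = 3 := by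
        rw [Finset.card_insert_of_notMem (by simp [hi01, hi02]),
          Finset.card_insert_of_notMem (by simp [hi12]), Finset.card_singleton]
      have := sum_const_pairs ({i0, i1, i2} : Finset (Fin N)) dbar (k, l)
        (by intro v hv'
            simp only [Finset.mem_insert, Finset.mem_singleton] at hv'
            rcases hv' with rfl | rfl | rfl
            · exact hb0
            · exact hb1
            · exact hb2) f
      rw [this, hcard]; norm_num
    rw [hS2def, Finset.sum_union hS1T, htransA f, hTsum, hfilter,
      Finset.sum_union hdisjf, htriple]
  have key1 := slack_transfer d dbar σ hσ S₁ (l - 1) hS1card htransA hs0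
  have key2 := slack_transfer d dbar σ hσ S₂ (l + 2) hS2card htransB hs3
  have t1 := tight G d hG S₁ (by rw [hS1card]; exact key1)
  have t2 := tight G d hG S₂ (by rw [hS2card]; exact key2)
  intro j hj
  have hdj : d j = (k, l) := hv j hj
  have hjS1 : j ∉ S₁ := Finset.disjoint_right.1 hS1T hj
  have hjS2 : j ∈ S₂ := by rw [hS2def]; exact Finset.mem_union_right _ hj
  have hin1 : indegS G S₁ j = l - 1 := by
    have h := t1 j
    rw [if_neg hjS1, hdj, hS1card] at h
    simp only at h
    omega
  have hin2 : indegS G S₂ j = l := by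
    have h := t2 j
    rw [if_pos hjS2, hdj, hS2card] at h
    simp only at h
    omega
  have hsplit2 : indegS G S₂ j = indegS G S₁ j + indegS G T j := by
    rw [indegS, hS2def, Finset.filter_union,
      Finset.card_union_of_disjoint (Finset.disjoint_filter_filter hS1T)]
    rfl
  have : indegS G T j = 1 := by omega
  exact this

lemma slackBar_swap {N : ℕ} (a : Fin N → ℕ × ℕ) (m : ℕ) :
    slackBar (fun i => ((a i).2, (a i).1)) m = slackUbar a m := rfl

/-- degree-sequence criterion, sufficiency: let `d` be a
digraphic pair sequence, `d̄` its positive and `d̲` its negative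
lexicographical ordering.  If there are distinct coordinates `j₁, j₂, j₃` and
`(k,l) ≥ (1,1)` with `d_{j₁} = d_{j₂} = d_{j₃} = (k,l)`, the (1-based)
coordinates `l, l+1, l+2` of `d̄` and `k, k+1, k+2` of `d̲` all equal `(k,l)`,
and the slacks satisfy `(s̄_{l-1}, s̄_l, s̄_{l+1}, s̄_{l+2}) = (0,1,1,0)` and
`(s̲_{k-1}, s̲_k, s̲_{k+1}, s̲_{k+2}) = (0,1,1,0)`, then `v_{j₁}, v_{j₂},
v_{j₃}` induce a directed 3-cycle in every realization of `d`. -/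
theorem statement13 {N : ℕ} (d : Fin N → ℕ × ℕ)
    (hd : ∃ G : SDigraph (Fin N), Realizes G d)
    (dbar dubar : Fin N → ℕ × ℕ)
    (hbarperm : IsRearrangement d dbar) (hbarord : PosOrdered dbar)
    (hubarperm : IsRearrangement d dubar) (hubarord : NegOrdered dubar)
    (j₁ j₂ j₃ : Fin N) (h12 : j₁ ≠ j₂) (h23 : j₂ ≠ j₃) (h13 : j₁ ≠ j₃)
    (k l : ℕ) (hk1 : 1 ≤ k) (hl1 : 1 ≤ l)
    (hlN : l + 1 < N) (hkN : k + 1 < N)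
    (hval : d j₁ = (k, l) ∧ d j₂ = (k, l) ∧ d j₃ = (k, l))
    (hbarcoord : dbar ⟨l - 1, by omega⟩ = (k, l) ∧
      dbar ⟨l, by omega⟩ = (k, l) ∧ dbar ⟨l + 1, by omega⟩ = (k, l))
    (hubarcoord : dubar ⟨k - 1, by omega⟩ = (k, l) ∧
      dubar ⟨k, by omega⟩ = (k, l) ∧ dubar ⟨k + 1, by omega⟩ = (k, l))
    (hbarslack : slackBar dbar (l - 1) = 0 ∧ slackBar dbar l = 1 ∧
      slackBar dbar (l + 1) = 1 ∧ slackBar dbar (l + 2) = 0)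
    (hubarslack : slackUbar dubar (k - 1) = 0 ∧ slackUbar dubar k = 1 ∧
      slackUbar dubar (k + 1) = 1 ∧ slackUbar dubar (k + 2) = 0) :
    ∀ G : SDigraph (Fin N), Realizes G d → InducesC3 G j₁ j₂ j₃ := by
  intro G hG
  obtain ⟨σb, hσb⟩ := hbarperm
  obtain ⟨σu, hσu⟩ := hubarperm
  have hvT : ∀ j ∈ ({j₁, j₂, j₃} : Finset (Fin N)), d j = (k, l) := by
    intro j hj
    simp only [Finset.mem_insert, Finset.mem_singleton] at hj
    rcases hj with rfl | rfl | rfl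
    · exact hval.1
    · exact hval.2.1
    · exact hval.2.2
  have hin := oneSide d dbar G hG σb hσb j₁ j₂ j₃ h12 h23 h13 k l hl1 hlN hvT
    hbarcoord.1 hbarcoord.2.1 hbarcoord.2.2 hbarslack.1 hbarslack.2.2.2
  let Grev : SDigraph (Fin N) := ⟨fun x y => G.Adj y x, G.irrefl⟩
  have hGadj : ∀ a b, Grev.Adj a b = G.Adj b a := fun _ _ => rfl
  have hGrev : Realizes Grev (fun v => ((d v).2, (d v).1)) := by
    intro v
    exact ⟨(hG v).2, (hG v).1⟩
  have hσu' : ∀ i, (fun i => ((dubar i).2, (dubar i).1)) i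
      = (fun v => ((d v).2, (d v).1)) (σu i) := by
    intro i
    simp only
    rw [hσu i]
  have hout := oneSide (fun v => ((d v).2, (d v).1)) (fun i => ((dubar i).2, (dubar i).1))
    Grev hGrev σu hσu' j₁ j₂ j₃ h12 h23 h13 l k hk1 hkN
    (by intro j hj; beta_reduce; rw [hvT j hj])
    (by beta_reduce; rw [hubarcoord.1]) (by beta_reduce; rw [hubarcoord.2.1])
    (by beta_reduce; rw [hubarcoord.2.2])
    (by rw [slackBar_swap]; exact hubarslack.1)
    (by rw [slackBar_swap]; exact hubarslack.2.2.2)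
  have hout' : ∀ j ∈ ({j₁, j₂, j₃} : Finset (Fin N)),
      (({j₁, j₂, j₃} : Finset (Fin N)).filter fun u => G.Adj j u = true).card = 1 :=
    fun j hj => hout j hj
  have expand : ∀ f : Fin N → Bool,
      (({j₁, j₂, j₃} : Finset (Fin N)).filter fun u => f u = true).card
        = (if f j₁ = true then 1 else 0) +
          ((if f j₂ = true then 1 else 0) + (if f j₃ = true then 1 else 0)) := by
    intro f
    rw [Finset.card_filter,
      show ({j₁, j₂, j₃} : Finset (Fin N)) = insert j₁ (insert j₂ {j₃}) from rfl,
      Finset.sum_insert (by simp [h12, h13]), Finset.sum_insert (by simp [h23]),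
      Finset.sum_singleton]
  have ein1 := hin j₁ (by simp)
  have ein2 := hin j₂ (by simp)
  have ein3 := hin j₃ (by simp)
  have eout1 := hout' j₁ (by simp)
  have eout2 := hout' j₂ (by simp)
  have eout3 := hout' j₃ (by simp)
  rw [expand] at ein1 ein2 ein3 eout1 eout2 eout3
  rw [G.irrefl j₁] at ein1 eout1
  rw [G.irrefl j₂] at ein2 eout2
  rw [G.irrefl j₃] at ein3 eout3
  clear hin hout hout' hGrev hGadj hσu' hvT hσb hσu expand
  clear Grev
  clear hd hval hbarcoord hubarcoord hbarslack hubarslack hbarord hubarord hk1 hl1 hlN hkN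
  show (G.Adj j₁ j₂ = true ∧ G.Adj j₂ j₃ = true ∧ G.Adj j₃ j₁ = true ∧
      G.Adj j₂ j₁ = false ∧ G.Adj j₃ j₂ = false ∧ G.Adj j₁ j₃ = false) ∨
    (G.Adj j₂ j₁ = true ∧ G.Adj j₃ j₂ = true ∧ G.Adj j₁ j₃ = true ∧
      G.Adj j₁ j₂ = false ∧ G.Adj j₂ j₃ = false ∧ G.Adj j₃ j₁ = false)
  cases h1 : G.Adj j₁ j₂ <;> cases h2 : G.Adj j₂ j₃ <;> cases h3 : G.Adj j₃ j₁ <;>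
    cases h4 : G.Adj j₂ j₁ <;> cases h5 : G.Adj j₃ j₂ <;> cases h6 : G.Adj j₁ j₃ <;>
    simp_all
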